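/- Let H be a cocommutative bialgebra over F (char 0) and T a primitive element (Δ₀(T) = T⊗1 + 1⊗T). Then for all nonnegative integers m, Δ₀(T^[m]) = Σ_{i=0}^m C(m,i) T^[i] ⊗ T^[m−i], where T^[k] = T(T−1)···(T−k+1). -/
import Mathlib

open scoped TensorProduct

/-- Falling factorial `T^[k] = T(T−1)⋯(T−k+1)` shifted by `a` in an `F`-algebra. -/
noncomputable def fall {F A : Type*} [Field F] [Ring A] [Algebra F A]
    (x : A) (a : F) : ℕ → A
  | 0 => 1
  | n + 1 => fall x a n * (x + algebraMap F A (a - n))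

lemma fall_succ' {F A : Type*} [Field F] [Ring A] [Algebra F A] (T : A) (n : ℕ) :
    fall T (0 : F) (n + 1) = fall T (0 : F) n * (T - (n : A)) := by
  simp [fall, sub_eq_add_neg, map_natCast (algebraMap F A)]

lemma fall_mul_T {F A : Type*} [Field F] [Ring A] [Algebra F A] (T : A) (n : ℕ) :
    fall T (0 : F) n * T = fall T (0 : F) (n + 1) + n • fall T (0 : F) n := by
  rw [fall_succ', mul_sub, nsmul_eq_mul]
  rw [(Nat.cast_commute n (fall T (0 : F) n)).eq]
  abel

theorem comul_fall {F H : Type*} [Field F] [CharZero F] [Ring H] [Bialgebra F H]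
    (hcocomm : ∀ h : H, (TensorProduct.comm F H H) (Coalgebra.comul h) = Coalgebra.comul h)
    (T : H) (hT : Coalgebra.comul T = T ⊗ₜ[F] 1 + 1 ⊗ₜ[F] T) (m : ℕ) :
    Coalgebra.comul (fall T (0 : F) m)
      = ∑ i ∈ Finset.range (m + 1),
          (m.choose i) • (fall T (0 : F) i ⊗ₜ[F] fall T (0 : F) (m - i)) := by
  set f : ℕ → H := fall T (0 : F) with hf
  induction m with
  | zero =>
      simp [hf, fall, Algebra.TensorProduct.one_def]
  | succ m ih =>
      have key : Coalgebra.comul (R := F) (f (m + 1))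
          = ∑ i ∈ Finset.range (m + 1), (m.choose i) •
              (f (i + 1) ⊗ₜ[F] f (m - i) + f i ⊗ₜ[F] f (m + 1 - i)) := by
        rw [hf, fall_succ', ← hf, Bialgebra.comul_mul, ih, map_sub, hT,
          Bialgebra.comul_natCast, Finset.sum_mul]
        refine Finset.sum_congr rfl fun i hi => ?_
        have him : i ≤ m := Nat.lt_succ_iff.mp (Finset.mem_range.mp hi)
        have hsub : m - i + 1 = m + 1 - i := by omega
        rw [smul_mul_assoc]
        congr 1
        have hcast : ((m : H ⊗[F] H)) = m • (1 ⊗ₜ[F] (1 : H)) := by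
          rw [← Algebra.TensorProduct.one_def, nsmul_eq_mul, mul_one]
        rw [hcast, mul_sub, mul_add, mul_smul_comm]
        simp only [Algebra.TensorProduct.tmul_mul_tmul, mul_one, one_mul]
        rw [hf, fall_mul_T, fall_mul_T, ← hf, hsub,
          TensorProduct.add_tmul, TensorProduct.tmul_add, TensorProduct.smul_tmul',
          TensorProduct.tmul_smul]
        rw [sub_eq_iff_eq_add]
        simp only [TensorProduct.smul_tmul']
        have haux : (i • f i) ⊗ₜ[F] f (m - i) + ((m - i) • f i) ⊗ₜ[F] f (m - i)
            = (m • f i) ⊗ₜ[F] f (m - i) := by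
          rw [← TensorProduct.add_tmul, ← add_nsmul]
          congr 2
          omega
        rw [← haux]
        abel
      rw [key]
      rw [Finset.sum_range_succ' (fun j => ((m + 1).choose j) • (f j ⊗ₜ[F] f (m + 1 - j)))]
      simp only [Nat.choose_succ_succ, add_smul, smul_add, Finset.sum_add_distrib]
      rw [add_assoc]
      congr 1
      · refine Finset.sum_congr rfl fun i hi => ?_
        have h3 : m + 1 - (i + 1) = m - i := by omega
        rw [h3]
      · have h2 := Finset.sum_range_succ' (fun j => (m.choose j) • (f j ⊗ₜ[F] f (m + 1 - j))) (m + 1)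
        rw [Finset.sum_range_succ (fun j => (m.choose j) • (f j ⊗ₜ[F] f (m + 1 - j))) (m + 1)] at h2
        simp only [Nat.choose_succ_self, zero_smul, add_zero] at h2
        rw [h2]
        congr 1
        simp
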